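/- Let α ∈ (0,1), β > 0 and a₂ > a₁ > 0, b₂ ≥ b₁ ≥ 0 with a₂b₁ = a₁b₂ (restriction (T1)) and a₂ ≥ 2b₂·cosh(βπ/2)·√(1 + cot²(απ/2)·tanh²(βπ/2)) (restriction (T2₂)). Then Im P(iω)·Re Q(iω) − Re P(iω)·Im Q(iω) ≥ 0 for every ω > 0 (i.e., the loss modulus Im Ê(ω) is nonnegative). -/

import Mathlib

/-- `φ_{a,b}(s) = 1 + a·s^α + b·(s^{α+iβ} + s^{α−iβ})`, with principal complex powers. -/
noncomputable def phi (α β a b : ℝ) (s : ℂ) : ℂ :=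
  1 + (a : ℂ) * s ^ (α : ℂ) +
    (b : ℂ) * (s ^ ((α : ℂ) + Complex.I * (β : ℂ)) + s ^ ((α : ℂ) - Complex.I * (β : ℂ)))

/-- The constant `cosh(βπ/2)·√(1 + cot²(απ/2)·tanh²(βπ/2))` appearing in restrictions (T2). -/
noncomputable def Ccot (α β : ℝ) : ℝ :=
  Real.cosh (β * (Real.pi / 2)) *
    Real.sqrt (1 + (Real.cot (α * (Real.pi / 2)) * Real.tanh (β * (Real.pi / 2))) ^ 2)

lemma cexp_re_im (x y : ℝ) :
    Complex.exp ((x:ℂ) + (y:ℝ)*Complex.I) =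
      ((Real.exp x * Real.cos y : ℝ) : ℂ) + ((Real.exp x * Real.sin y : ℝ) : ℂ) * Complex.I := by
  apply Complex.ext <;>
    simp [Complex.exp_re, Complex.exp_im, Complex.cos_ofReal_re, Complex.sin_ofReal_re]

lemma phi_eval (α β a b ω : ℝ) (hω : 0 < ω) :
    phi α β a b (Complex.I * ω) =
    Complex.ofReal (1 + Real.exp (α * Real.log ω) *
        ((a + 2*b*Real.cosh (β*(Real.pi/2))*Real.cos (β*Real.log ω)) * Real.cos (α*(Real.pi/2))
          + (2*b*Real.sinh (β*(Real.pi/2))*Real.sin (β*Real.log ω)) * Real.sin (α*(Real.pi/2)))) +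
    Complex.ofReal (Real.exp (α * Real.log ω) *
        ((a + 2*b*Real.cosh (β*(Real.pi/2))*Real.cos (β*Real.log ω)) * Real.sin (α*(Real.pi/2))
          - (2*b*Real.sinh (β*(Real.pi/2))*Real.sin (β*Real.log ω)) * Real.cos (α*(Real.pi/2)))) * Complex.I := by
  unfold phi
  have hs : (Complex.I * (ω:ℂ)) ≠ 0 := by
    simp [Complex.I_ne_zero, Complex.ofReal_ne_zero, hω.ne']
  have hlog : Complex.log (Complex.I * (ω:ℂ)) = (Real.log ω : ℂ) + ((Real.pi/2 : ℝ) : ℂ) * Complex.I := by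
    rw [Complex.log_mul_ofReal ω hω Complex.I Complex.I_ne_zero, Complex.log_I]
    push_cast; ring
  set L := Real.log ω with hL
  have e1 : ((L : ℂ) + ((Real.pi/2 : ℝ):ℂ) * Complex.I) * (α : ℂ)
      = ((α*L : ℝ):ℂ) + ((α*(Real.pi/2) : ℝ):ℂ) * Complex.I := by push_cast; ring
  have e2 : ((L : ℂ) + ((Real.pi/2 : ℝ):ℂ) * Complex.I) * ((α : ℂ) + Complex.I * (β:ℂ))
      = ((α*L - β*(Real.pi/2) : ℝ):ℂ) + ((α*(Real.pi/2) + β*L : ℝ):ℂ) * Complex.I := by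
    push_cast; ring_nf; rw [Complex.I_sq]; ring
  have e3 : ((L : ℂ) + ((Real.pi/2 : ℝ):ℂ) * Complex.I) * ((α : ℂ) - Complex.I * (β:ℂ))
      = ((α*L + β*(Real.pi/2) : ℝ):ℂ) + ((α*(Real.pi/2) - β*L : ℝ):ℂ) * Complex.I := by
    push_cast; ring_nf; rw [Complex.I_sq]; ring
  rw [Complex.cpow_def_of_ne_zero hs, Complex.cpow_def_of_ne_zero hs, Complex.cpow_def_of_ne_zero hs,
    hlog, e1, e2, e3, cexp_re_im, cexp_re_im, cexp_re_im]
  apply Complex.ext <;>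
    simp only [Complex.add_re, Complex.add_im, Complex.mul_re, Complex.mul_im, Complex.one_re,
      Complex.one_im, Complex.ofReal_re, Complex.ofReal_im, Complex.I_re, Complex.I_im] <;>
    rw [Real.cos_add, Real.sin_add, Real.cos_sub, Real.sin_sub, Real.cosh_eq, Real.sinh_eq,
      Real.exp_sub, Real.exp_add, Real.exp_neg] <;>
  · field_simp
    ring

lemma key_bound (θ h L : ℝ) (hs : 0 < Real.sin θ) :
    -(Real.sin θ * (Real.cosh h * Real.sqrt (1 + (Real.cot θ * Real.tanh h)^2)))
      ≤ Real.cosh h * Real.cos L * Real.sin θ - Real.sinh h * Real.sin L * Real.cos θ := by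
  set X := Real.cosh h * Real.sin θ with hX
  set Y := Real.sinh h * Real.cos θ with hY
  have hch : 0 < Real.cosh h := Real.cosh_pos h
  have hXY : Real.sin θ * (Real.cosh h * Real.sqrt (1 + (Real.cot θ * Real.tanh h)^2))
      = Real.sqrt (X^2 + Y^2) := by
    have h1 : X^2 + Y^2 = (Real.sin θ * Real.cosh h)^2 * (1 + (Real.cot θ * Real.tanh h)^2) := by
      rw [hX, hY, Real.cot_eq_cos_div_sin, Real.tanh_eq_sinh_div_cosh]
      field_simp
    rw [h1, Real.sqrt_mul (sq_nonneg _), Real.sqrt_sq (by positivity)]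
    ring
  rw [hXY]
  have h1 : (X*Real.cos L - Y*Real.sin L)^2 ≤ X^2+Y^2 := by
    nlinarith [sq_nonneg (X*Real.sin L + Y*Real.cos L), Real.sin_sq_add_cos_sq L]
  have h2 : -(Real.sqrt (X^2+Y^2)) ≤ X*Real.cos L - Y*Real.sin L := by
    nlinarith [Real.sq_sqrt (show (0:ℝ) ≤ X^2+Y^2 by positivity), Real.sqrt_nonneg (X^2+Y^2),
      sq_nonneg (X*Real.cos L - Y*Real.sin L + Real.sqrt (X^2+Y^2))]
  have h3 : Real.cosh h * Real.cos L * Real.sin θ - Real.sinh h * Real.sin L * Real.cos θ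
      = X*Real.cos L - Y*Real.sin L := by rw [hX, hY]; ring
  linarith

/-- Under `a₂ > a₁ > 0`, `b₂ ≥ b₁ ≥ 0`, (T1) `a₂b₁ = a₁b₂` and (T2₂)
`a₂ ≥ 2b₂·cosh(βπ/2)·√(1 + cot²(απ/2)·tanh²(βπ/2))`, the loss modulus is nonnegative:
`Im P(iω)·Re Q(iω) − Re P(iω)·Im Q(iω) ≥ 0` for every `ω > 0`. -/
theorem stmt_6 (α β a₁ a₂ b₁ b₂ : ℝ) (hα : α ∈ Set.Ioo (0:ℝ) 1) (hβ : 0 < β)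
    (ha₁ : 0 < a₁) (ha : a₁ < a₂) (hb₁ : 0 ≤ b₁) (hb : b₁ ≤ b₂)
    (hT1 : a₂ * b₁ = a₁ * b₂) (hT2 : a₂ ≥ 2 * b₂ * Ccot α β) :
    ∀ ω : ℝ, 0 < ω →
      0 ≤ (phi α β a₂ b₂ (Complex.I * (ω : ℂ))).im * (phi α β a₁ b₁ (Complex.I * (ω : ℂ))).re -
        (phi α β a₂ b₂ (Complex.I * (ω : ℂ))).re * (phi α β a₁ b₁ (Complex.I * (ω : ℂ))).im := by
  intro ω hω
  rw [phi_eval α β a₂ b₂ ω hω, phi_eval α β a₁ b₁ ω hω]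
  simp only [Complex.add_re, Complex.add_im, Complex.mul_re, Complex.mul_im, Complex.I_re,
    Complex.I_im, Complex.ofReal_re, Complex.ofReal_im, mul_zero, mul_one, zero_mul, sub_zero,
    zero_add, add_zero, zero_sub, neg_zero, neg_neg]
  set u := Real.exp (α * Real.log ω) with hu
  set θ := α * (Real.pi/2) with hθ
  set C := Real.cosh (β*(Real.pi/2)) with hC
  set S := Real.sinh (β*(Real.pi/2)) with hS
  set cL := Real.cos (β*Real.log ω) with hcL
  set sL := Real.sin (β*Real.log ω) with hsL
  have hupos : 0 < u := Real.exp_pos _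
  have hsin : 0 < Real.sin θ := by
    apply Real.sin_pos_of_pos_of_lt_pi
    · have := hα.1; positivity
    · have h1 := hα.2
      have h2 : Real.pi / 2 < Real.pi := by linarith [Real.pi_pos]
      nlinarith [Real.pi_pos]
  have hkey := key_bound θ (β*(Real.pi/2)) (β*Real.log ω) hsin
  rw [← hC, ← hS, ← hcL, ← hsL] at hkey
  have hCcot : Ccot α β = C * Real.sqrt (1 + (Real.cot θ * Real.tanh (β*(Real.pi/2)))^2) := by
    rw [Ccot, hC, hθ]
  have hCnn : 0 ≤ Ccot α β := by
    rw [hCcot]; positivity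
  -- the bracket G
  have hG : 0 ≤ (a₂-a₁)*Real.sin θ + 2*(b₂-b₁)*(C*cL*Real.sin θ - S*sL*Real.cos θ) := by
    have hdb : 0 ≤ b₂ - b₁ := by linarith
    have hstep : 2*(b₂-b₁)*(-(Real.sin θ * Ccot α β))
        ≤ 2*(b₂-b₁)*(C*cL*Real.sin θ - S*sL*Real.cos θ) := by
      apply mul_le_mul_of_nonneg_left _ (by linarith)
      rw [hCcot]
      exact hkey
    have hfac : 0 ≤ (a₂-a₁) - 2*(b₂-b₁)*Ccot α β := by
      have hbb : a₂*(b₂-b₁) = b₂*(a₂-a₁) := by linear_combination -hT1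
      have h4 : 0 ≤ (a₂ - 2*b₂*Ccot α β) * (a₂ - a₁) := by
        apply mul_nonneg (by linarith) (by linarith)
      nlinarith [ha, ha₁]
    nlinarith [mul_nonneg hfac hsin.le, mul_nonneg hfac hsin.le]
  -- the algebraic identity reducing the goal to u * G
  have hid : (u*((a₂ + 2*b₂*C*cL) * Real.sin θ - (2*b₂*S*sL) * Real.cos θ)) *
        (1 + u*((a₁ + 2*b₁*C*cL) * Real.cos θ + (2*b₁*S*sL) * Real.sin θ)) -
      (1 + u*((a₂ + 2*b₂*C*cL) * Real.cos θ + (2*b₂*S*sL) * Real.sin θ)) *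
        (u*((a₁ + 2*b₁*C*cL) * Real.sin θ - (2*b₁*S*sL) * Real.cos θ))
      = u * ((a₂-a₁)*Real.sin θ + 2*(b₂-b₁)*(C*cL*Real.sin θ - S*sL*Real.cos θ)) := by
    linear_combination (u^2*2*S*sL*(Real.sin θ^2 + Real.cos θ^2)) * hT1
  calc (0:ℝ) ≤ u * ((a₂-a₁)*Real.sin θ + 2*(b₂-b₁)*(C*cL*Real.sin θ - S*sL*Real.cos θ)) :=
        mul_nonneg hupos.le hG
    _ = _ := by rw [← hid]
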